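/- arXiv:1903.05910 — 4 statements merged into one kernel-verified Lean document; each statement's English description precedes it below -/
import Mathlib

section
/- If a homogeneous noncommutative polynomial p of degree d with coefficient function P admits a t-term NC Waring decomposition, i.e. there exists A : Fin t → Fin g → ℂ with p = ∑_{s : Fin t} (∑_{j : Fin g} A(s,j) • x_j)^d in the free algebra, then p satisfies the compatibility condition: P(α) = P(α̃) for all words α, α̃ : Fin d → Fin g with 1_j^α = 1_j^{α̃} for every j : Fin g. -/
open scoped BigOperators

/-- The ordered noncommutative word `x_{α 0} x_{α 1} ⋯ x_{α (d-1)}` in the free algebra. -/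
noncomputable def ncWord {g d : ℕ} (α : Fin d → Fin g) : FreeAlgebra ℂ (Fin g) :=
  (List.ofFn fun i => FreeAlgebra.ι ℂ (α i)).prod

/-- `1_j^α`: the number of indices `i` with `α i = j`. -/
def wordCount {g d : ℕ} (α : Fin d → Fin g) (j : Fin g) : ℕ :=
  (Finset.univ.filter fun i => α i = j).card

lemma ncWord_cons {g d : ℕ} (j : Fin g) (β : Fin d → Fin g) :
    ncWord (Fin.cons j β) = FreeAlgebra.ι ℂ j * ncWord β := by
  simp [ncWord, List.ofFn_succ]

lemma expand {g : ℕ} (B : Fin g → ℂ) (d : ℕ) :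
    (∑ j, B j • FreeAlgebra.ι ℂ j) ^ d
      = ∑ α : Fin d → Fin g, (∏ i, B (α i)) • ncWord α := by
  induction d with
  | zero =>
    simp [ncWord]
  | succ d ih =>
    rw [pow_succ', ih, Finset.mul_sum]
    rw [← (Fin.consEquiv (fun _ : Fin (d + 1) => Fin g)).sum_comp
      (fun α : Fin (d + 1) → Fin g => (∏ i, B (α i)) • ncWord α)]
    rw [Fintype.sum_prod_type, Finset.sum_comm]
    refine Finset.sum_congr rfl fun β _ => ?_
    rw [Finset.sum_mul]
    refine Finset.sum_congr rfl fun j _ => ?_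
    rw [show (Fin.consEquiv fun _ : Fin (d + 1) => Fin g) (j, β) = Fin.cons j β from rfl,
      ncWord_cons, Fin.prod_univ_succ, Fin.cons_zero]
    simp only [Fin.cons_succ, smul_mul_assoc, mul_smul_comm, smul_smul]
    ring_nf

lemma e_word {g : ℕ} (l : List (Fin g)) :
    FreeAlgebra.equivMonoidAlgebraFreeMonoid ((l.map (FreeAlgebra.ι ℂ)).prod)
      = MonoidAlgebra.single (FreeMonoid.ofList l) (1 : ℂ) := by
  induction l with
  | nil => simp [MonoidAlgebra.one_def]
  | cons a l ih =>
    simp only [List.map_cons, List.prod_cons, map_mul, ih]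
    have ha : FreeAlgebra.equivMonoidAlgebraFreeMonoid (FreeAlgebra.ι ℂ a)
        = MonoidAlgebra.single (FreeMonoid.of a) (1 : ℂ) := by
      simp [FreeAlgebra.equivMonoidAlgebraFreeMonoid, MonoidAlgebra.of_apply]
    rw [ha, MonoidAlgebra.single_mul_single, one_mul]
    rfl

lemma e_ncWord {g d : ℕ} (α : Fin d → Fin g) :
    FreeAlgebra.equivMonoidAlgebraFreeMonoid (ncWord α)
      = MonoidAlgebra.single (FreeMonoid.ofList (List.ofFn α)) (1 : ℂ) := by
  have : ncWord α = ((List.ofFn α).map (FreeAlgebra.ι ℂ)).prod := by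
    rw [List.map_ofFn]; rfl
  rw [this, e_word]

theorem stmt0 (g d t : ℕ) (hg : 1 ≤ g) (hd : 1 ≤ d) (ht : 1 ≤ t)
    (P : (Fin d → Fin g) → ℂ) (A : Fin t → Fin g → ℂ)
    (hdecomp : (∑ α : Fin d → Fin g, P α • ncWord α)
      = ∑ s : Fin t, (∑ j : Fin g, A s j • FreeAlgebra.ι ℂ j) ^ d) :
    ∀ α α' : Fin d → Fin g,
      (∀ j : Fin g, wordCount α j = wordCount α' j) → P α = P α' := by
  have key : ∀ α : Fin d → Fin g, P α = ∑ s : Fin t, ∏ i, A s (α i) := by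
    intro α
    have hdecomp' := hdecomp
    simp only [expand] at hdecomp'
    have h := congrArg (FreeAlgebra.equivMonoidAlgebraFreeMonoid) hdecomp'
    simp only [map_sum, map_smul, e_ncWord] at h
    have inj : ∀ β : Fin d → Fin g,
        FreeMonoid.ofList (List.ofFn β) = FreeMonoid.ofList (List.ofFn α) ↔ β = α := by
      intro β
      constructor
      · intro hb
        exact List.ofFn_inj.mp (congrArg FreeMonoid.toList hb)
      · rintro rfl; rfl
    have h' : (∑ x : Fin d → Fin g,
        P x • Finsupp.single (FreeMonoid.ofList (List.ofFn x)) (1 : ℂ))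
        = ∑ x : Fin t, ∑ y : Fin d → Fin g,
          (∏ i, A x (y i)) • Finsupp.single (FreeMonoid.ofList (List.ofFn y)) (1 : ℂ) := by
      simpa only [MonoidAlgebra.coeff_sum, MonoidAlgebra.coeff_smul, MonoidAlgebra.coeff_single]
        using congrArg MonoidAlgebra.coeff h
    have h2 := DFunLike.congr_fun h' (FreeMonoid.ofList (List.ofFn α))
    classical
    simp only [Finsupp.coe_finset_sum, Finset.sum_apply, Finsupp.smul_apply, smul_eq_mul,
      Finsupp.single_apply, inj, mul_ite, mul_one, mul_zero,
      Finset.sum_ite_eq', Finset.mem_univ, if_true] at h2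
    exact h2
  have prodCount : ∀ (s : Fin t) (α : Fin d → Fin g),
      (∏ i, A s (α i)) = ∏ j : Fin g, (A s j) ^ wordCount α j := by
    intro s α
    rw [← Finset.prod_fiberwise_of_maps_to (g := α) (t := Finset.univ)
      (fun i _ => Finset.mem_univ (α i)) (fun i => A s (α i))]
    refine Finset.prod_congr rfl fun j _ => ?_
    rw [Finset.prod_congr rfl (fun i hi => ?_), Finset.prod_const, wordCount]
    · exact congrArg (A s) (Finset.mem_filter.mp hi).2
  intro α α' hc
  rw [key α, key α']
  refine Finset.sum_congr rfl fun s _ => ?_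
  rw [prodCount s α, prodCount s α']
  exact Finset.prod_congr rfl fun j _ => by rw [hc j]
end

section
/- If a homogeneous noncommutative polynomial p of degree d ≥ 1 with coefficient function P : (Fin d → Fin g) → ℂ satisfies the compatibility condition, then p has an NC Waring decomposition: there exist t ≥ 1 and A : Fin t → Fin g → ℂ with p = ∑_{s : Fin t} (∑_{j : Fin g} A(s,j) • x_j)^d in the free algebra FreeAlgebra ℂ (Fin g). -/
open scoped BigOperators

/-- The coefficient vector of the `d`-th power of a generic linear form. -/
noncomputable def Vfun {g : ℕ} (d : ℕ) (a : Fin g → ℂ) : (Fin d → Fin g) → ℂ :=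
  fun α => ∏ i, a (α i)

set_option maxHeartbeats 1000000 in
lemma expand_pow {g : ℕ} (a : Fin g → ℂ) :
    ∀ d : ℕ, (∑ j : Fin g, a j • FreeAlgebra.ι ℂ j) ^ d
      = ∑ α : Fin d → Fin g, (∏ i, a (α i)) • ncWord α
  | 0 => by
    simp [ncWord, Finset.univ_unique]
  | (n + 1) => by
    rw [pow_succ', expand_pow a n, Finset.sum_mul_sum,
      ← Equiv.sum_comp (Fin.consEquiv fun _ => Fin g)
        (fun α : Fin (n + 1) → Fin g => (∏ i, a (α i)) • ncWord α),
      Fintype.sum_prod_type]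
    refine Finset.sum_congr rfl fun j _ => Finset.sum_congr rfl fun β _ => ?_
    simp only [Fin.consEquiv_apply]
    have h1 : ncWord (Fin.cons (α := fun _ => Fin g) j β) = FreeAlgebra.ι ℂ j * ncWord β := by
      simp [ncWord, List.ofFn_succ, Function.comp]
    have h2 : (∏ i, a (Fin.cons (α := fun _ => Fin g) j β i)) = a j * ∏ i, a (β i) := by
      rw [Fin.prod_univ_succ]; simp
    rw [h2, show ncWord ((Fin.consEquiv fun _ => Fin g) (j, β))
        = FreeAlgebra.ι ℂ j * ncWord β from h1, smul_mul_smul_comm]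

/-- The multidegree of a word, as a finitely supported function. -/
noncomputable def Dword {g d : ℕ} (α : Fin d → Fin g) : Fin g →₀ ℕ :=
  ∑ i, Finsupp.single (α i) 1

lemma Dword_apply {g d : ℕ} (α : Fin d → Fin g) (j : Fin g) :
    Dword α j = wordCount α j := by
  classical
  simp [Dword, Finsupp.finset_sum_apply, Finsupp.single_apply, wordCount,
    Finset.sum_boole]

lemma prod_X_eq_monomial {g d : ℕ} (α : Fin d → Fin g) :
    (∏ i, (MvPolynomial.X (α i) : MvPolynomial (Fin g) ℂ))
      = MvPolynomial.monomial (Dword α) 1 := by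
  classical
  rw [Dword]
  induction (Finset.univ : Finset (Fin d)) using Finset.induction with
  | empty => simp
  | insert a s hx ih =>
    rw [Finset.prod_insert hx, Finset.sum_insert hx, ih, MvPolynomial.X,
      MvPolynomial.monomial_mul, mul_one]

set_option maxHeartbeats 1000000 in
lemma mem_span_V {g d : ℕ} (hd : 1 ≤ d) (P : (Fin d → Fin g) → ℂ)
    (hcompat : ∀ α α' : Fin d → Fin g,
      (∀ j : Fin g, wordCount α j = wordCount α' j) → P α = P α') :
    P ∈ Submodule.span ℂ (Set.range (Vfun (g := g) d)) := by
  classical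
  by_contra hP
  obtain ⟨f, hfP, hfV⟩ := Submodule.exists_dual_map_eq_bot_of_notMem hP inferInstance
  have hf0 : ∀ a : Fin g → ℂ, f (Vfun d a) = 0 := by
    intro a
    have : f (Vfun d a) ∈ (Submodule.span ℂ (Set.range (Vfun (g := g) d))).map f :=
      Submodule.mem_map_of_mem (Submodule.subset_span ⟨a, rfl⟩)
    rw [hfV] at this
    simpa using this
  set c : (Fin d → Fin g) → ℂ := fun α => f (fun j => if α = j then 1 else 0) with hc
  have hfsum : ∀ h : (Fin d → Fin g) → ℂ, f h = ∑ α, h α * c α := by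
    intro h
    conv_lhs => rw [pi_eq_sum_univ h]
    rw [map_sum]
    exact Finset.sum_congr rfl fun α _ => by rw [map_smul]; simp [hc, smul_eq_mul]
  -- the auxiliary commutative polynomial
  set q : MvPolynomial (Fin g) ℂ :=
    ∑ α : Fin d → Fin g, MvPolynomial.C (c α) * ∏ i, MvPolynomial.X (α i) with hq
  have hq0 : q = 0 := by
    apply MvPolynomial.funext
    intro a
    have := hf0 a
    rw [hfsum] at this
    simp only [hq, map_sum, MvPolynomial.eval_mul, MvPolynomial.eval_C, map_prod,
      MvPolynomial.eval_X, map_zero]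
    rw [← this]
    exact Finset.sum_congr rfl fun α _ => mul_comm _ _
  have hfiber : ∀ m : Fin g →₀ ℕ,
      ∑ α ∈ Finset.univ.filter (fun α => Dword α = m), c α = 0 := by
    intro m
    have := congrArg (MvPolynomial.coeff m) hq0
    simp only [hq, MvPolynomial.coeff_sum, MvPolynomial.coeff_zero] at this
    rw [← this, Finset.sum_filter]
    refine Finset.sum_congr rfl fun α _ => ?_
    rw [prod_X_eq_monomial, MvPolynomial.C_mul_monomial, mul_one,
      MvPolynomial.coeff_monomial]
  apply hfP
  rw [hfsum]
  rw [← Finset.sum_fiberwise_of_maps_to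
    (fun α (_ : α ∈ Finset.univ) => Finset.mem_image_of_mem Dword (Finset.mem_univ α))
    (fun α => P α * c α)]
  refine Finset.sum_eq_zero fun m hm => ?_
  obtain ⟨α₀, _, hα₀⟩ := Finset.mem_image.mp hm
  have : ∀ α ∈ Finset.univ.filter (fun α => Dword α = m), P α * c α = P α₀ * c α := by
    intro α hα
    rw [Finset.mem_filter] at hα
    congr 1
    refine hcompat α α₀ fun j => ?_
    rw [← Dword_apply, ← Dword_apply, hα.2, hα₀]
  rw [Finset.sum_congr rfl this, ← Finset.mul_sum, hfiber m, mul_zero]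

set_option maxHeartbeats 1000000 in
theorem stmt5 (g d : ℕ) (hg : 1 ≤ g) (hd : 1 ≤ d)
    (P : (Fin d → Fin g) → ℂ)
    (hcompat : ∀ α α' : Fin d → Fin g,
      (∀ j : Fin g, wordCount α j = wordCount α' j) → P α = P α') :
    ∃ (t : ℕ) (_ : 1 ≤ t) (A : Fin t → Fin g → ℂ),
      (∑ α : Fin d → Fin g, P α • ncWord α)
        = ∑ s : Fin t, (∑ j : Fin g, A s j • FreeAlgebra.ι ℂ j) ^ d := by
  classical
  have hmem := mem_span_V hd P hcompat
  rw [Finsupp.mem_span_range_iff_exists_finsupp] at hmem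
  obtain ⟨cc, hcc⟩ := hmem
  -- choose d-th roots of the coefficients
  have hroot : ∀ a : Fin g → ℂ, ∃ z : ℂ, z ^ d = cc a :=
    fun a => IsAlgClosed.exists_pow_nat_eq _ hd
  choose z hz using hroot
  set n := cc.support.card with hn
  set e : Fin n ≃ {a // a ∈ cc.support} := (cc.support.equivFin).symm with he
  set B : Fin n → Fin g → ℂ := fun s => z (e s) • (e s : Fin g → ℂ) with hB
  set A : Fin (n + 1) → Fin g → ℂ := Fin.snoc B 0 with hA
  refine ⟨n + 1, Nat.succ_le_succ (Nat.zero_le n), A, ?_⟩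
  have expand : ∀ s : Fin (n + 1),
      (∑ j : Fin g, A s j • FreeAlgebra.ι ℂ j) ^ d
        = ∑ α : Fin d → Fin g, Vfun d (A s) α • ncWord α :=
    fun s => expand_pow _ d
  rw [Finset.sum_congr rfl fun s _ => expand s, Finset.sum_comm]
  refine Finset.sum_congr rfl fun α _ => ?_
  rw [← Finset.sum_smul]
  congr 1
  -- P α = ∑ s, Vfun d (A s) α
  have hVhom : ∀ (w : ℂ) (a : Fin g → ℂ), Vfun d (w • a) α = w ^ d * Vfun d a α := by
    intro w a
    simp only [Vfun, Pi.smul_apply, smul_eq_mul]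
    rw [Finset.prod_mul_distrib, Finset.prod_const, Finset.card_univ, Fintype.card_fin]
  have hV0 : Vfun (g := g) d 0 α = 0 := by
    have hne : (Finset.univ : Finset (Fin d)).Nonempty := by
      have : Nonempty (Fin d) := ⟨⟨0, hd⟩⟩
      exact Finset.univ_nonempty
    simp only [Vfun, Pi.zero_apply]
    exact Finset.prod_eq_zero hne.choose_spec rfl
  have hPα : P α = ∑ a ∈ cc.support, cc a * Vfun d a α := by
    rw [← hcc, Finsupp.sum, Finset.sum_apply]
    simp only [Pi.smul_apply, smul_eq_mul]
  rw [hPα, Fin.sum_univ_castSucc]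
  have hlast : Vfun d (A (Fin.last n)) α = 0 := by
    rw [hA, Fin.snoc_last]; exact hV0
  rw [hlast, add_zero]
  have hterm : ∀ s : Fin n, Vfun d (A s.castSucc) α = cc (e s) * Vfun d (e s) α := by
    intro s
    rw [hA, Fin.snoc_castSucc, hB]
    simp only
    rw [hVhom, hz]
  rw [Finset.sum_congr rfl fun s _ => hterm s]
  exact ((Equiv.sum_comp e fun a : {a // a ∈ cc.support} =>
    cc a * Vfun d a α).trans (Finset.sum_coe_sort cc.support
      fun a => cc a * Vfun d a α)).symm
end

section
/- Let δ₂ divide δ₁ and let n be divisible by δ₁. If a coefficient function P : (Fin n → Fin g) → ℂ satisfies the δ₂-compatibility condition (P(α) = P(α̃) whenever α ∼_{δ₂} α̃), then P satisfies the δ₁-compatibility condition (P(α) = P(α̃) whenever α ∼_{δ₁} α̃). -/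
/-- The `δ`-block decomposition of a word `w : Fin n → Fin g`, assuming `δ ∣ n`:
the `k`-th block is the length-`δ` subword starting at position `k * δ`. -/
def blocks {g : ℕ} (n δ : ℕ) (h : δ ∣ n) (w : Fin n → Fin g) :
    Fin (n / δ) → (Fin δ → Fin g) := fun k i =>
  w ⟨k.1 * δ + i.1, by
    have h1 : i.1 < δ := i.isLt
    have h2 : k.1 + 1 ≤ n / δ := k.isLt
    have h3 : (k.1 + 1) * δ ≤ (n / δ) * δ := Nat.mul_le_mul_right δ h2
    have h4 : (n / δ) * δ = n := Nat.div_mul_cancel h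
    nlinarith⟩

lemma aux_div {m a r : ℕ} (hm : 0 < m) (hr : r < m) : (a * m + r) / m = a := by
  rw [add_comm, Nat.add_mul_div_right _ _ hm, Nat.div_eq_of_lt hr, zero_add]

lemma aux_mod {m a r : ℕ} (hr : r < m) : (a * m + r) % m = r := by
  rw [add_comm, Nat.add_mul_mod_self_right, Nat.mod_eq_of_lt hr]

theorem stmt15 (g n δ₁ δ₂ : ℕ) (hg : 1 ≤ g) (hδ₁ : 1 ≤ δ₁) (hδ₂ : 1 ≤ δ₂)
    (hdvd : δ₂ ∣ δ₁) (hn : δ₁ ∣ n)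
    (P : (Fin n → Fin g) → ℂ)
    (hP : ∀ α α' : Fin n → Fin g,
      (∃ π : Equiv.Perm (Fin (n / δ₂)),
        blocks n δ₂ (hdvd.trans hn) α' = blocks n δ₂ (hdvd.trans hn) α ∘ π) →
      P α = P α') :
    ∀ α α' : Fin n → Fin g,
      (∃ π : Equiv.Perm (Fin (n / δ₁)),
        blocks n δ₁ hn α' = blocks n δ₁ hn α ∘ π) →
      P α = P α' := by
  rintro α α' ⟨π, hπ⟩
  apply hP
  set m := δ₁ / δ₂ with hm_def
  have hm0 : 0 < m := Nat.div_pos (Nat.le_of_dvd hδ₁ hdvd) hδ₂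
  have hδ : m * δ₂ = δ₁ := Nat.div_mul_cancel hdvd
  have hN : n / δ₂ = (n / δ₁) * m := by
    rw [hm_def, ← Nat.mul_div_assoc _ hdvd, Nat.div_mul_cancel hn]
  have hqlt : ∀ x : ℕ, x < n / δ₂ → x / m < n / δ₁ := fun x hx =>
    (Nat.div_lt_iff_lt_mul hm0).mpr (lt_of_lt_of_eq hx hN)
  have hbd : ∀ a x : ℕ, a < n / δ₁ → x < n / δ₂ → a * m + x % m < n / δ₂ := by
    intro a x ha hx
    refine lt_of_lt_of_eq ?_ hN.symm
    calc a * m + x % m < a * m + m := Nat.add_lt_add_left (Nat.mod_lt _ hm0) _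
    _ = (a + 1) * m := by ring
    _ ≤ (n / δ₁) * m := Nat.mul_le_mul_right m ha
  let σ : Equiv.Perm (Fin (n / δ₂)) :=
  { toFun := fun j => ⟨(π ⟨j.1 / m, hqlt j.1 j.isLt⟩).1 * m + j.1 % m,
      hbd _ _ (π _).isLt j.isLt⟩
    invFun := fun j => ⟨(π.symm ⟨j.1 / m, hqlt j.1 j.isLt⟩).1 * m + j.1 % m,
      hbd _ _ (π.symm _).isLt j.isLt⟩
    left_inv := fun j => by
      apply Fin.ext
      have hr : j.1 % m < m := Nat.mod_lt _ hm0
      show (π.symm ⟨((π ⟨j.1 / m, hqlt j.1 j.isLt⟩).1 * m + j.1 % m) / m, _⟩).1 * m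
          + ((π ⟨j.1 / m, hqlt j.1 j.isLt⟩).1 * m + j.1 % m) % m = j.1
      have h1 : (⟨((π ⟨j.1 / m, hqlt j.1 j.isLt⟩).1 * m + j.1 % m) / m,
          hqlt _ (hbd _ _ (π _).isLt j.isLt)⟩ : Fin (n / δ₁))
          = π ⟨j.1 / m, hqlt j.1 j.isLt⟩ := Fin.ext (aux_div hm0 hr)
      rw [h1, Equiv.symm_apply_apply, aux_mod hr]
      show j.1 / m * m + j.1 % m = j.1
      rw [mul_comm]
      exact Nat.div_add_mod j.1 m
    right_inv := fun j => by
      apply Fin.ext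
      have hr : j.1 % m < m := Nat.mod_lt _ hm0
      show (π ⟨((π.symm ⟨j.1 / m, hqlt j.1 j.isLt⟩).1 * m + j.1 % m) / m, _⟩).1 * m
          + ((π.symm ⟨j.1 / m, hqlt j.1 j.isLt⟩).1 * m + j.1 % m) % m = j.1
      have h1 : (⟨((π.symm ⟨j.1 / m, hqlt j.1 j.isLt⟩).1 * m + j.1 % m) / m,
          hqlt _ (hbd _ _ (π.symm _).isLt j.isLt)⟩ : Fin (n / δ₁))
          = π.symm ⟨j.1 / m, hqlt j.1 j.isLt⟩ := Fin.ext (aux_div hm0 hr)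
      rw [h1, Equiv.apply_symm_apply, aux_mod hr]
      show j.1 / m * m + j.1 % m = j.1
      rw [mul_comm]
      exact Nat.div_add_mod j.1 m }
  refine ⟨σ, ?_⟩
  funext j i
  have hr : j.1 % m < m := Nat.mod_lt _ hm0
  have hlt : j.1 % m * δ₂ + i.1 < δ₁ := by
    calc j.1 % m * δ₂ + i.1 < j.1 % m * δ₂ + δ₂ := Nat.add_lt_add_left i.isLt _
    _ = (j.1 % m + 1) * δ₂ := by ring
    _ ≤ m * δ₂ := Nat.mul_le_mul_right δ₂ hr
    _ = δ₁ := hδ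
  have key := congrFun (congrFun hπ ⟨j.1 / m, hqlt j.1 j.isLt⟩) ⟨j.1 % m * δ₂ + i.1, hlt⟩
  simp only [blocks, Function.comp] at key ⊢
  have harith1 : j.1 * δ₂ + i.1 = (j.1 / m) * δ₁ + (j.1 % m * δ₂ + i.1) := by
    calc j.1 * δ₂ + i.1 = (j.1 / m * m + j.1 % m) * δ₂ + i.1 := by
          rw [mul_comm (j.1 / m) m, Nat.div_add_mod]
    _ = j.1 / m * (m * δ₂) + (j.1 % m * δ₂ + i.1) := by ring
    _ = (j.1 / m) * δ₁ + (j.1 % m * δ₂ + i.1) := by rw [hδ]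
  have harith2 : (σ j).1 * δ₂ + i.1
      = (π ⟨j.1 / m, hqlt j.1 j.isLt⟩).1 * δ₁ + (j.1 % m * δ₂ + i.1) := by
    show ((π ⟨j.1 / m, hqlt j.1 j.isLt⟩).1 * m + j.1 % m) * δ₂ + i.1 = _
    calc ((π ⟨j.1 / m, hqlt j.1 j.isLt⟩).1 * m + j.1 % m) * δ₂ + i.1
        = (π ⟨j.1 / m, hqlt j.1 j.isLt⟩).1 * (m * δ₂) + (j.1 % m * δ₂ + i.1) := by ring
    _ = _ := by rw [hδ]
  convert key using 2
  · exact Fin.ext harith1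
  · exact Fin.ext harith2
end

section
/- Let p = x₀⁴ + x₀x₁x₁x₀ + x₁x₀x₀x₁ + x₁⁴ in the free algebra FreeAlgebra ℂ (Fin 2). Then: (a) p satisfies the 2-compatibility condition; (b) the commutative collapse of p equals (X₀² + X₁²)² in MvPolynomial (Fin 2) ℂ (so the collapse has a one-term, hence two-term, (2,2)-Waring decomposition); but (c) there do not exist homogeneous degree-2 noncommutative polynomials H₁, H₂ ∈ FreeAlgebra ℂ (Fin 2) (i.e. of the form ∑_{β : Fin 2 → Fin 2} A(β) • x_{β(0)} x_{β(1)}) with p = H₁² + H₂². -/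
open scoped BigOperators
open scoped Classical

/-- The generators of the free algebra on two letters. -/
noncomputable def x (j : Fin 2) : FreeAlgebra ℂ (Fin 2) := FreeAlgebra.ι ℂ j

/-- The polynomial `p = x₀⁴ + x₀x₁x₁x₀ + x₁x₀x₀x₁ + x₁⁴`. -/
noncomputable def pEx : FreeAlgebra ℂ (Fin 2) :=
  x 0 * x 0 * x 0 * x 0 + x 0 * x 1 * x 1 * x 0 + x 1 * x 0 * x 0 * x 1 + x 1 * x 1 * x 1 * x 1

noncomputable def E : FreeAlgebra ℂ (Fin 2) ≃ₐ[ℂ] MonoidAlgebra ℂ (FreeMonoid (Fin 2)) :=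
  FreeAlgebra.equivMonoidAlgebraFreeMonoid

def w4 (i j k l : Fin 2) : FreeMonoid (Fin 2) :=
  FreeMonoid.of i * FreeMonoid.of j * FreeMonoid.of k * FreeMonoid.of l

noncomputable def coeffL (w : FreeMonoid (Fin 2)) : FreeAlgebra ℂ (Fin 2) →ₗ[ℂ] ℂ :=
  ((Finsupp.lapply w).comp (MonoidAlgebra.coeffLinearEquiv ℂ).toLinearMap).comp E.toLinearMap

lemma w4_eq_iff (a b c d i j k l : Fin 2) :
    w4 a b c d = w4 i j k l ↔ a = i ∧ b = j ∧ c = k ∧ d = l := by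
  constructor
  · intro h
    have h2 := congrArg FreeMonoid.toList h
    simp only [w4, FreeMonoid.toList_mul, FreeMonoid.toList_of, List.cons_append,
      List.nil_append, List.cons.injEq, and_true] at h2
    tauto
  · rintro ⟨rfl, rfl, rfl, rfl⟩; rfl

lemma E_mon (i j k l : Fin 2) :
    E (x i * x j * x k * x l) = MonoidAlgebra.single (w4 i j k l) 1 := by
  simp [E, x, w4, FreeAlgebra.equivMonoidAlgebraFreeMonoid, MonoidAlgebra.of_apply, map_mul,
    MonoidAlgebra.single_mul_single]

lemma coeffL_mon (w : FreeMonoid (Fin 2)) (i j k l : Fin 2) :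
    coeffL w (x i * x j * x k * x l) = if w4 i j k l = w then 1 else 0 := by
  rw [coeffL, LinearMap.comp_apply]; erw [AlgEquiv.toLinearMap_apply, E_mon]
  simp [Finsupp.lapply, MonoidAlgebra.coeffLinearEquiv, MonoidAlgebra.coeff_single, Finsupp.single_apply]

lemma cP_eval (i j k l : Fin 2) :
    coeffL (w4 i j k l) pEx =
      (if (0:Fin 2) = i ∧ (0:Fin 2) = j ∧ (0:Fin 2) = k ∧ (0:Fin 2) = l then 1 else 0)
      + (if (0:Fin 2) = i ∧ (1:Fin 2) = j ∧ (1:Fin 2) = k ∧ (0:Fin 2) = l then 1 else 0)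
      + (if (1:Fin 2) = i ∧ (0:Fin 2) = j ∧ (0:Fin 2) = k ∧ (1:Fin 2) = l then 1 else 0)
      + (if (1:Fin 2) = i ∧ (1:Fin 2) = j ∧ (1:Fin 2) = k ∧ (1:Fin 2) = l then 1 else 0) := by
  simp only [pEx, map_add, coeffL_mon, w4_eq_iff]

lemma cP_symm (i j k l : Fin 2) :
    coeffL (w4 k l i j) pEx = coeffL (w4 i j k l) pEx := by
  rw [cP_eval, cP_eval]
  fin_cases i <;> fin_cases j <;> fin_cases k <;> fin_cases l <;> norm_num

lemma ext4 (μ ν : Fin 2 → Fin 2 → Fin 2) (h00 : ν 0 0 = μ 0 0) (h01 : ν 0 1 = μ 0 1)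
    (h10 : ν 1 0 = μ 1 0) (h11 : ν 1 1 = μ 1 1) : ν = μ := by
  funext i j; fin_cases i <;> fin_cases j <;> assumption

lemma key_a (P : (Fin 2 → (Fin 2 → Fin 2)) → ℂ)
    (hP : pEx = (∑ μ : Fin 2 → (Fin 2 → Fin 2),
        P μ • (x (μ 0 0) * x (μ 0 1) * x (μ 1 0) * x (μ 1 1))))
    (μ : Fin 2 → (Fin 2 → Fin 2)) :
    P μ = coeffL (w4 (μ 0 0) (μ 0 1) (μ 1 0) (μ 1 1)) pEx := by
  rw [hP, map_sum]
  rw [Finset.sum_eq_single μ]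
  · simp [coeffL_mon]
  · intro ν _ hne
    rw [LinearMap.map_smul, coeffL_mon, w4_eq_iff]
    rw [if_neg, smul_zero]
    rintro ⟨h1, h2, h3, h4⟩
    exact hne (ext4 μ ν h1 h2 h3 h4)
  · intro h; exact absurd (Finset.mem_univ μ) h

def pr (i j : Fin 2) : Fin 2 → Fin 2 := ![i, j]

lemma ext2 (β : Fin 2 → Fin 2) : β = pr (β 0) (β 1) := by
  funext i; fin_cases i <;> rfl

lemma key_c (A : (Fin 2 → Fin 2) → ℂ) (i j k l : Fin 2) :
    coeffL (w4 i j k l) ((∑ β : Fin 2 → Fin 2, A β • (x (β 0) * x (β 1))) ^ 2)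
      = A (pr i j) * A (pr k l) := by
  rw [sq, Finset.sum_mul_sum]
  have expand : ∀ β γ : Fin 2 → Fin 2,
      (A β • (x (β 0) * x (β 1))) * (A γ • (x (γ 0) * x (γ 1)))
        = (A β * A γ) • (x (β 0) * x (β 1) * x (γ 0) * x (γ 1)) := by
    intro β γ
    rw [smul_mul_smul_comm]; simp [mul_assoc]
  simp only [expand, map_sum]
  rw [Finset.sum_eq_single (pr i j)]
  · rw [Finset.sum_eq_single (pr k l)]
    · rw [LinearMap.map_smul, coeffL_mon, w4_eq_iff]
      simp [pr, smul_eq_mul]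
    · intro γ _ hne
      rw [LinearMap.map_smul, coeffL_mon, w4_eq_iff]
      rw [if_neg, smul_zero]
      rintro ⟨h1, h2, h3, h4⟩
      exact hne (by rw [ext2 γ, h3, h4])
    · intro h; exact absurd (Finset.mem_univ _) h
  · intro β _ hne
    apply Finset.sum_eq_zero
    intro γ _
    rw [LinearMap.map_smul, coeffL_mon, w4_eq_iff]
    rw [if_neg, smul_zero]
    rintro ⟨h1, h2, h3, h4⟩
    exact hne (by rw [ext2 β, h1, h2])
  · intro h; exact absurd (Finset.mem_univ _) h

lemma perm2 (π : Equiv.Perm (Fin 2)) : π = 1 ∨ π = Equiv.swap 0 1 := by revert π; decide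

theorem stmt16 :
    -- (a) p satisfies the 2-compatibility condition
    (∀ P : (Fin 2 → (Fin 2 → Fin 2)) → ℂ,
      pEx = (∑ μ : Fin 2 → (Fin 2 → Fin 2),
          P μ • (x (μ 0 0) * x (μ 0 1) * x (μ 1 0) * x (μ 1 1))) →
      ∀ (μ : Fin 2 → (Fin 2 → Fin 2)) (π : Equiv.Perm (Fin 2)), P (μ ∘ π) = P μ)
    ∧
    -- (b) the commutative collapse of p equals (X₀² + X₁²)²
    ((MvPolynomial.X 0 * MvPolynomial.X 0 * MvPolynomial.X 0 * MvPolynomial.X 0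
        + MvPolynomial.X 0 * MvPolynomial.X 1 * MvPolynomial.X 1 * MvPolynomial.X 0
        + MvPolynomial.X 1 * MvPolynomial.X 0 * MvPolynomial.X 0 * MvPolynomial.X 1
        + MvPolynomial.X 1 * MvPolynomial.X 1 * MvPolynomial.X 1 * MvPolynomial.X 1
        : MvPolynomial (Fin 2) ℂ)
      = (MvPolynomial.X 0 ^ 2 + MvPolynomial.X 1 ^ 2) ^ 2)
    ∧
    -- (c) p is not a sum of two squares of homogeneous degree-2 NC polynomials
    ¬ ∃ A B : (Fin 2 → Fin 2) → ℂ,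
        pEx = (∑ β : Fin 2 → Fin 2, A β • (x (β 0) * x (β 1))) ^ 2
            + (∑ β : Fin 2 → Fin 2, B β • (x (β 0) * x (β 1))) ^ 2 := by
  refine ⟨?_, by ring, ?_⟩
  · intro P hP μ π
    rcases perm2 π with rfl | rfl
    · congr 1
    · rw [key_a P hP (μ ∘ Equiv.swap 0 1), key_a P hP μ]
      simp only [Function.comp_apply, Equiv.swap_apply_left, Equiv.swap_apply_right]
      exact cP_symm _ _ _ _
  · rintro ⟨A, B, h⟩
    have hc : ∀ i j k l : Fin 2,
        A (pr i j) * A (pr k l) + B (pr i j) * B (pr k l) = coeffL (w4 i j k l) pEx := by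
      intro i j k l
      rw [h, map_add, key_c, key_c]
    have h1 := hc 0 0 0 0
    have h2 := hc 1 1 1 1
    have h3 := hc 0 0 1 1
    have h4 := hc 0 1 0 0
    have h5 := hc 0 1 1 1
    have h6 := hc 0 1 1 0
    rw [cP_eval] at h1 h2 h3 h4 h5 h6
    norm_num at h1 h2 h3 h4 h5 h6
    set e := A (pr 0 0); set f := B (pr 0 0)
    set g := A (pr 1 1); set hh := B (pr 1 1)
    set a := A (pr 0 1); set b := B (pr 0 1)
    set c := A (pr 1 0); set d := B (pr 1 0)
    have hD : (e * hh - f * g) ^ 2 = 1 := by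
      linear_combination (g * g + hh * hh) * h1 + h2 - (e * g + f * hh) * h3
    have ha : a * (e * hh - f * g) = 0 := by linear_combination hh * h4 - f * h5
    have hb : b * (e * hh - f * g) = 0 := by linear_combination e * h5 - g * h4
    have : (1 : ℂ) = 0 := by
      linear_combination c * (e * hh - f * g) * ha + d * (e * hh - f * g) * hb
        - (e * hh - f * g) ^ 2 * h6 - hD
    exact one_ne_zero this
end
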